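/- arXiv:1612.08136 — 2 statements merged into one kernel-verified Lean document; each statement's English description precedes it below -/
import Mathlib

section
/- Let s ≥ 2 and let H be a simple graph with H → (s, s)^v. Then the lexicographic product C_{4s−1}[H] satisfies C_{4s−1}[H] → (2s, 2s)^v. -/
/-- `G → (a₁,…,a_r)ᵛ`: for every coloring of the vertices of `G` with `r` colors,
there is a color `i` and a clique of `G` on `a i` vertices all of whose vertices
receive color `i`. -/
def VArrows {V : Type*} {r : ℕ} (G : SimpleGraph V) (a : Fin r → ℕ) : Prop :=
  ∀ c : V → Fin r, ∃ i : Fin r, ∃ t : Finset V,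
    G.IsNClique (a i) t ∧ ∀ v ∈ t, c v = i

/-- The lexicographic product `G[H]` of two simple graphs: `(u, v)` is adjacent to
`(u', v')` iff `u` is adjacent to `u'` in `G`, or `u = u'` and `v` is adjacent to
`v'` in `H`. -/
def SimpleGraph.lexProd {V W : Type*} (G : SimpleGraph V) (H : SimpleGraph W) :
    SimpleGraph (V × W) where
  Adj p q := G.Adj p.1 q.1 ∨ (p.1 = q.1 ∧ H.Adj p.2 q.2)
  symm := by
    constructor
    rintro p q (h | ⟨h1, h2⟩)
    · exact Or.inl h.symm
    · exact Or.inr ⟨h1.symm, h2.symm⟩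
  loopless := by
    constructor
    rintro p (h | ⟨-, h⟩)
    · exact G.loopless.irrefl _ h
    · exact H.loopless.irrefl _ h


open Fin.NatCast in
lemma odd_cycle_mono_edge {n : ℕ} (hn : 3 ≤ n) (hodd : Odd n) (f : Fin n → Fin 2) :
    ∃ u v, (SimpleGraph.cycleGraph n).Adj u v ∧ f u = f v := by
  by_contra hcon
  push_neg at hcon
  have h0 : 0 < n := by omega
  have fin2 : ∀ a b : Fin 2, a ≠ b → a = b + 1 := by decide
  have key : ∀ k, (hk : k < n) → f ⟨k, hk⟩ = f ⟨0, h0⟩ + (k : Fin 2) := by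
    intro k
    induction k with
    | zero => intro hk; simp
    | succ m ih =>
      intro hk
      have hm : m < n := by omega
      have hadj : (SimpleGraph.cycleGraph n).Adj ⟨m, hm⟩ ⟨m + 1, hk⟩ := by
        rw [SimpleGraph.cycleGraph_adj']
        right
        rw [Fin.sub_def]
        simp only
        have h1 : n - m + (m + 1) = n + 1 := by omega
        rw [h1, Nat.add_mod_left, Nat.mod_eq_of_lt (by omega)]
      have hne := hcon _ _ hadj.symm
      have := fin2 _ _ hne
      rw [this, ih hm]
      push_cast
      rw [add_assoc]
  obtain ⟨p, hp⟩ := hodd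
  have hlast : n - 1 < n := by omega
  have hfeq : f ⟨n - 1, hlast⟩ = f ⟨0, h0⟩ := by
    rw [key (n - 1) hlast]
    have : (n - 1 : ℕ) = 2 * p := by omega
    rw [this]
    push_cast
    simp
  have hadj : (SimpleGraph.cycleGraph n).Adj ⟨n - 1, hlast⟩ ⟨0, h0⟩ := by
    rw [SimpleGraph.cycleGraph_adj']
    right
    rw [Fin.sub_def]
    simp only
    have h1 : n - (n - 1) + 0 = 1 := by omega
    rw [h1, Nat.mod_eq_of_lt (by omega)]
  exact hcon _ _ hadj hfeq


/-- If `s ≥ 2` and `H → (s, s)ᵛ`, then `C_{4s-1}[H] → (2s, 2s)ᵛ`. -/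
theorem stmt_9 {W : Type*} (s : ℕ) (hs : 2 ≤ s) (H : SimpleGraph W)
    (hH : VArrows H ![s, s]) :
    VArrows ((SimpleGraph.cycleGraph (4 * s - 1)).lexProd H) ![2 * s, 2 * s] := by
  classical
  intro c
  choose i t ht hc using fun u => hH (fun w => c (u, w))
  have hss : ∀ j : Fin 2, ![s, s] j = s := by intro j; fin_cases j <;> rfl
  have h2ss : ∀ j : Fin 2, ![2 * s, 2 * s] j = 2 * s := by intro j; fin_cases j <;> rfl
  obtain ⟨u, v, hadj, hiuv⟩ :=
    odd_cycle_mono_edge (n := 4 * s - 1) (by omega) ⟨2 * s - 1, by omega⟩ i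
  have huv : u ≠ v := hadj.ne
  let e : Fin (4 * s - 1) → W ↪ (Fin (4 * s - 1)) × W :=
    fun x => ⟨fun w => (x, w), fun a b h => by simpa using h⟩
  have hmem : ∀ x (p : (Fin (4 * s - 1)) × W), p ∈ (t x).map (e x) ↔ p.1 = x ∧ p.2 ∈ t x := by
    intro x p
    simp only [Finset.mem_map, Function.Embedding.coeFn_mk, e]
    constructor
    · rintro ⟨w, hw, rfl⟩; exact ⟨rfl, hw⟩
    · rintro ⟨h1, h2⟩; exact ⟨p.2, h2, by rw [← h1]; rfl⟩
  have hdisj : Disjoint ((t u).map (e u)) ((t v).map (e v)) := by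
    rw [Finset.disjoint_left]
    intro p hp hp'
    rw [hmem] at hp hp'
    exact huv (hp.1 ▸ hp'.1 ▸ rfl)
  refine ⟨i u, (t u).map (e u) ∪ (t v).map (e v), ⟨?_, ?_⟩, ?_⟩
  · intro p hp q hq hne
    simp only [Finset.coe_union, Set.mem_union, Finset.mem_coe, hmem] at hp hq
    obtain ⟨p1, p2⟩ := p
    obtain ⟨q1, q2⟩ := q
    rcases hp with ⟨hpu, hp2⟩ | ⟨hpu, hp2⟩ <;> rcases hq with ⟨hqu, hq2⟩ | ⟨hqu, hq2⟩
    · refine Or.inr ⟨hpu.trans hqu.symm, (ht u).1 hp2 hq2 ?_⟩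
      intro h; exact hne (by rw [Prod.mk.injEq]; exact ⟨hpu.trans hqu.symm, h⟩)
    · exact Or.inl (by rw [show p1 = u from hpu, show q1 = v from hqu]; exact hadj)
    · exact Or.inl (by rw [show p1 = v from hpu, show q1 = u from hqu]; exact hadj.symm)
    · refine Or.inr ⟨hpu.trans hqu.symm, (ht v).1 hp2 hq2 ?_⟩
      intro h; exact hne (by rw [Prod.mk.injEq]; exact ⟨hpu.trans hqu.symm, h⟩)
  · rw [Finset.card_union_of_disjoint hdisj, Finset.card_map, Finset.card_map,
      (ht u).2, (ht v).2, hss, hss, h2ss]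
    omega
  · intro p hp
    simp only [Finset.mem_union, hmem] at hp
    obtain ⟨p1, p2⟩ := p
    rcases hp with ⟨rfl, hp2⟩ | ⟨rfl, hp2⟩
    · exact hc _ _ hp2
    · rw [hc _ _ hp2, hiuv]
end

section
/- Let s ≥ 2 and suppose H is a K_{s+1}-free simple graph on n vertices with H → (s, s)^v and χ(H) = 2s−1. Then the lexicographic product C_{4s−1}[H] is a K_{2s+1}-free graph on (4s−1)·n vertices with C_{4s−1}[H] → (2s, 2s)^v and χ(C_{4s−1}[H]) = 4s−1. (Hence F_v^χ(2s, 2s; 2s+1) ≤ (4s−1)·F_v^χ(s, s; s+1).) -/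
section Aux

open Finset

lemma StmtAux.val_add_one' {m : ℕ} [NeZero m] (hm : 2 ≤ m) (a : Fin m) :
    ((a + 1 : Fin m)).val = (a.val + 1) % m := by
  rw [Fin.add_def]
  simp only [Fin.val_one']
  rw [Nat.mod_eq_of_lt hm]

lemma StmtAux.succ_val {m : ℕ} [NeZero m] (hm : 2 ≤ m) (a : Fin m) :
    ((a + 1 : Fin m)).val = a.val + 1 ∨ (a.val = m - 1 ∧ (a + 1 : Fin m).val = 0) := by
  rw [StmtAux.val_add_one' hm]
  have := a.isLt
  rcases Nat.lt_or_ge (a.val + 1) m with h | h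
  · left; exact Nat.mod_eq_of_lt h
  · right
    have hv : a.val = m - 1 := by omega
    have : a.val + 1 = m := by omega
    rw [this, Nat.mod_self]
    exact ⟨hv, rfl⟩

lemma StmtAux.cyc_adj_iff {m : ℕ} [NeZero m] (hm : 3 ≤ m) {a b : Fin m} :
    (SimpleGraph.cycleGraph m).Adj a b ↔ b = a + 1 ∨ a = b + 1 := by
  obtain ⟨t, rfl⟩ : ∃ t, m = t + 2 := ⟨m - 2, by omega⟩
  rw [SimpleGraph.cycleGraph_adj]
  constructor
  · rintro (h | h)
    · right
      rw [eq_add_of_sub_eq h]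
      exact add_comm 1 b
    · left
      rw [eq_add_of_sub_eq h]
      exact add_comm 1 a
  · rintro (h | h)
    · right; rw [h]; exact add_sub_cancel_left a 1
    · left; rw [h]; exact add_sub_cancel_left b 1

lemma StmtAux.adj_succ {m : ℕ} [NeZero m] (hm : 3 ≤ m) (a : Fin m) :
    (SimpleGraph.cycleGraph m).Adj a (a + 1) :=
  (StmtAux.cyc_adj_iff hm).mpr (Or.inl rfl)

lemma StmtAux.cyc_adj_val {m : ℕ} [NeZero m] (hm : 3 ≤ m) {a b : Fin m}
    (h : (SimpleGraph.cycleGraph m).Adj a b) :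
    b.val = a.val + 1 ∨ (a.val = m - 1 ∧ b.val = 0) ∨
      a.val = b.val + 1 ∨ (b.val = m - 1 ∧ a.val = 0) := by
  rw [StmtAux.cyc_adj_iff hm] at h
  rcases h with h | h
  · rw [h]
    rcases StmtAux.succ_val (by omega) a with h2 | h2
    · exact Or.inl h2
    · exact Or.inr (Or.inl h2)
  · rw [h]
    rcases StmtAux.succ_val (by omega) b with h2 | h2
    · exact Or.inr (Or.inr (Or.inl h2))
    · exact Or.inr (Or.inr (Or.inr h2))

lemma StmtAux.cyc_cliqueFree {m : ℕ} (hm : 4 ≤ m) :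
    (SimpleGraph.cycleGraph m).CliqueFree 3 := by
  haveI : NeZero m := ⟨by omega⟩
  intro T hT
  obtain ⟨a, b, c, hab, hac, hbc, rfl⟩ := Finset.card_eq_three.mp hT.2
  have h1 : (SimpleGraph.cycleGraph m).Adj a b := hT.1 (by simp) (by simp) hab
  have h2 : (SimpleGraph.cycleGraph m).Adj a c := hT.1 (by simp) (by simp) hac
  have h3 : (SimpleGraph.cycleGraph m).Adj b c := hT.1 (by simp) (by simp) hbc
  have v1 := StmtAux.cyc_adj_val (by omega) h1
  have v2 := StmtAux.cyc_adj_val (by omega) h2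
  have v3 := StmtAux.cyc_adj_val (by omega) h3
  have nab : a.val ≠ b.val := fun h => hab (Fin.ext h)
  have nac : a.val ≠ c.val := fun h => hac (Fin.ext h)
  have nbc : b.val ≠ c.val := fun h => hbc (Fin.ext h)
  have := a.isLt; have := b.isLt; have := c.isLt
  omega

lemma StmtAux.mk_succ {m : ℕ} [NeZero m] (hm : 2 ≤ m) (j : ℕ) (h : j + 1 < m) :
    (⟨j, by omega⟩ : Fin m) + 1 = ⟨j + 1, h⟩ := by
  apply Fin.ext
  rw [StmtAux.val_add_one' hm]
  exact Nat.mod_eq_of_lt h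

lemma StmtAux.mk_last {m : ℕ} [NeZero m] (hm : 2 ≤ m) :
    (⟨m - 1, by omega⟩ : Fin m) + 1 = ⟨0, by omega⟩ := by
  apply Fin.ext
  rw [StmtAux.val_add_one' hm]
  have : m - 1 + 1 = m := by omega
  rw [this, Nat.mod_self]

lemma StmtAux.fin2_trans : ∀ x y z : Fin 2, x ≠ y → y ≠ z → x = z := by decide

lemma StmtAux.exists_mono_edge {m : ℕ} [NeZero m] (hm : 3 ≤ m) (hodd : m % 2 = 1)
    (d : Fin m → Fin 2) :
    ∃ a b : Fin m, (SimpleGraph.cycleGraph m).Adj a b ∧ d a = d b := by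
  by_contra hcon
  push_neg at hcon
  have key : ∀ j : ℕ, (hj : 2 * j < m) → d ⟨2 * j, hj⟩ = d ⟨0, by omega⟩ := by
    intro j
    induction j with
    | zero => intro hj; rfl
    | succ i ih =>
      intro hj
      have h1 : 2 * i + 1 < m := by omega
      have h2 : 2 * i + 2 < m := by omega
      have e1 : (⟨2 * i, by omega⟩ : Fin m) + 1 = ⟨2 * i + 1, h1⟩ :=
        StmtAux.mk_succ (by omega) _ h1
      have e2 : (⟨2 * i + 1, h1⟩ : Fin m) + 1 = ⟨2 * i + 2, h2⟩ :=
        StmtAux.mk_succ (by omega) _ h2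
      have a1 := hcon _ _ (e1 ▸ StmtAux.adj_succ hm ⟨2 * i, by omega⟩)
      have a2 := hcon _ _ (e2 ▸ StmtAux.adj_succ hm ⟨2 * i + 1, h1⟩)
      have h3 : d ⟨2 * i, by omega⟩ = d ⟨2 * i + 2, h2⟩ := StmtAux.fin2_trans _ _ _ a1 a2
      have hmk : (⟨2 * (i + 1), hj⟩ : Fin m) = ⟨2 * i + 2, h2⟩ := by
        apply Fin.ext; simp; omega
      rw [hmk, ← h3]
      exact ih (by omega)
  obtain ⟨j0, hj0⟩ : ∃ j0, m - 1 = 2 * j0 := ⟨(m - 1) / 2, by omega⟩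
  have hlt : 2 * j0 < m := by omega
  have hdm : d ⟨m - 1, by omega⟩ = d ⟨0, by omega⟩ := by
    have h4 := key j0 hlt
    have hmk : (⟨m - 1, by omega⟩ : Fin m) = ⟨2 * j0, hlt⟩ := by apply Fin.ext; simp; omega
    rw [hmk]; exact h4
  have hadj : (SimpleGraph.cycleGraph m).Adj ⟨m - 1, by omega⟩ ⟨0, by omega⟩ := by
    have h5 := StmtAux.adj_succ hm (⟨m - 1, by omega⟩ : Fin m)
    rwa [StmtAux.mk_last (by omega)] at h5
  exact hcon _ _ hadj hdm

lemma StmtAux.clique_card_le {V : Type*} {G : SimpleGraph V} {r : ℕ}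
    (hfree : G.CliqueFree (r + 1)) {t : Finset V} (ht : G.IsClique t) : t.card ≤ r := by
  by_contra h
  push_neg at h
  obtain ⟨u, hu, hcard⟩ := Finset.exists_subset_card_eq h
  exact hfree u ⟨ht.subset hu, hcard⟩

end Aux

/-- If `H` is a `K_{s+1}`-free graph on `n` vertices with `H → (s,s)ᵛ` and
`χ(H) = 2s-1`, then `C_{4s-1}[H]` is a `K_{2s+1}`-free graph on `(4s-1)·n` vertices
with `C_{4s-1}[H] → (2s, 2s)ᵛ` and `χ(C_{4s-1}[H]) = 4s-1`.
(Hence `F_v^χ(2s,2s;2s+1) ≤ (4s-1)·F_v^χ(s,s;s+1)`.) -/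
theorem stmt_10 (s n : ℕ) (hs : 2 ≤ s) (H : SimpleGraph (Fin n))
    (hHfree : H.CliqueFree (s + 1)) (hHarr : VArrows H ![s, s])
    (hHchi : H.chromaticNumber = ((2 * s - 1 : ℕ) : ℕ∞)) :
    Fintype.card (Fin (4 * s - 1) × Fin n) = (4 * s - 1) * n ∧
    ((SimpleGraph.cycleGraph (4 * s - 1)).lexProd H).CliqueFree (2 * s + 1) ∧
    VArrows ((SimpleGraph.cycleGraph (4 * s - 1)).lexProd H) ![2 * s, 2 * s] ∧
    ((SimpleGraph.cycleGraph (4 * s - 1)).lexProd H).chromaticNumber =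
      ((4 * s - 1 : ℕ) : ℕ∞) := by
  classical
  open Finset StmtAux Fin.NatCast Fin.CommRing in
  set m := 4 * s - 1 with hmdef
  haveI : NeZero m := ⟨by omega⟩
  set k := 2 * s - 1 with hkdef
  have hk3 : 3 ≤ k := by omega
  have hmk : m = 2 * k + 1 := by omega
  refine ⟨?_, ?_, ?_, ?_⟩
  · rw [Fintype.card_prod, Fintype.card_fin, Fintype.card_fin]
  · -- clique-freeness
    intro T hT
    set A := T.image Prod.fst with hA
    have hAclique : (SimpleGraph.cycleGraph m).IsClique A := by
      intro a ha b hb hne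
      simp only [hA, coe_image, Set.mem_image, mem_coe] at ha hb
      obtain ⟨p, hp, rfl⟩ := ha
      obtain ⟨q, hq, rfl⟩ := hb
      have hpq : p ≠ q := fun h => hne (by rw [h])
      rcases hT.1 hp hq hpq with h | ⟨h, -⟩
      · exact h
      · exact absurd h hne
    have hAcard : A.card ≤ 2 := by
      by_contra h
      push_neg at h
      obtain ⟨B, hBA, hB3⟩ := Finset.exists_subset_card_eq h
      exact cyc_cliqueFree (by omega) B ⟨hAclique.subset (by exact_mod_cast hBA), hB3⟩
    have hfiber : ∀ a : Fin m, (T.filter (fun p => p.1 = a)).card ≤ s := by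
      intro a
      have hinj : Set.InjOn Prod.snd
          ((T.filter (fun p => p.1 = a) : Finset (Fin m × Fin n)) : Set (Fin m × Fin n)) := by
        intro p hp q hq h
        simp only [coe_filter, Set.mem_setOf_eq] at hp hq
        exact Prod.ext (hp.2.trans hq.2.symm) h
      rw [← Finset.card_image_of_injOn hinj]
      apply clique_card_le hHfree
      intro v hv w hw hvw
      simp only [coe_image, Set.mem_image, mem_coe, mem_filter] at hv hw
      obtain ⟨p, ⟨hp, hp1⟩, rfl⟩ := hv
      obtain ⟨q, ⟨hq, hq1⟩, rfl⟩ := hw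
      have hpq : p ≠ q := fun h => hvw (by rw [h])
      rcases hT.1 hp hq hpq with h | ⟨-, h⟩
      · rw [hp1, hq1] at h
        exact absurd h (SimpleGraph.irrefl _)
      · exact h
    have hcards : T.card = ∑ a ∈ A, (T.filter (fun p => p.1 = a)).card :=
      Finset.card_eq_sum_card_fiberwise (fun p hp => Finset.mem_image_of_mem _ hp)
    have hle : T.card ≤ 2 * s := by
      calc T.card = ∑ a ∈ A, (T.filter (fun p => p.1 = a)).card := hcards
      _ ≤ ∑ _a ∈ A, s := Finset.sum_le_sum (fun a _ => hfiber a)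
      _ = A.card * s := by rw [Finset.sum_const, smul_eq_mul]
      _ ≤ 2 * s := Nat.mul_le_mul_right s hAcard
    rw [hT.2] at hle
    omega
  · -- VArrows
    intro c
    choose i t hclique hmono using fun j : Fin m => hHarr (fun v => c (j, v))
    have hss : ∀ i : Fin 2, ![s, s] i = s := fun i => by fin_cases i <;> rfl
    have h2ss : ∀ i : Fin 2, ![2 * s, 2 * s] i = 2 * s := fun i => by fin_cases i <;> rfl
    obtain ⟨a, b, hadj, hiab⟩ := exists_mono_edge (by omega) (by omega) i
    have hab : a ≠ b := hadj.ne
    refine ⟨i a, (t a).image (fun v => (a, v)) ∪ (t b).image (fun v => (b, v)), ⟨?_, ?_⟩, ?_⟩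
    · -- clique
      intro p hp q hq hpq
      simp only [coe_union, coe_image, Set.mem_union, Set.mem_image, mem_coe] at hp hq
      have adj_of_same : ∀ (x : Fin m) (v w : Fin n), v ∈ t x → w ∈ t x → (x, v) ≠ (x, w) →
          ((SimpleGraph.cycleGraph m).lexProd H).Adj (x, v) (x, w) := by
        intro x v w hv hw hne
        have hvw : v ≠ w := fun h => hne (by rw [h])
        exact Or.inr ⟨rfl, (hclique x).1 hv hw hvw⟩
      rcases hp with ⟨v, hv, rfl⟩ | ⟨v, hv, rfl⟩ <;> rcases hq with ⟨w, hw, rfl⟩ | ⟨w, hw, rfl⟩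
      · exact adj_of_same a v w hv hw hpq
      · exact Or.inl hadj
      · exact Or.inl hadj.symm
      · exact adj_of_same b v w hv hw hpq
    · -- cardinality
      rw [h2ss]
      rw [Finset.card_union_of_disjoint,
        Finset.card_image_of_injective _ (fun v w h => (Prod.mk.injEq _ _ _ _).mp h |>.2),
        Finset.card_image_of_injective _ (fun v w h => (Prod.mk.injEq _ _ _ _).mp h |>.2)]
      · rw [(hclique a).2, (hclique b).2, hss, hss]; ring
      · rw [Finset.disjoint_left]
        rintro ⟨x, v⟩ hx hy
        simp only [mem_image] at hx hy
        obtain ⟨v1, -, hv1⟩ := hx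
        obtain ⟨v2, -, hv2⟩ := hy
        exact hab ((congrArg Prod.fst hv1).trans (congrArg Prod.fst hv2).symm)
    · -- monochromatic
      intro p hp
      simp only [mem_union, mem_image] at hp
      rcases hp with ⟨w, hw, rfl⟩ | ⟨w, hw, rfl⟩
      · exact hmono a w hw
      · rw [hmono b w hw, hiab]
  · -- chromatic number
    have hcolH : H.Colorable k := SimpleGraph.chromaticNumber_le_iff_colorable.mp
      (le_of_eq (by rw [hHchi]))
    obtain ⟨f⟩ := hcolH
    -- upper bound: colorable with m colors
    have hub : ((SimpleGraph.cycleGraph m).lexProd H).Colorable m := by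
      have key : ∀ (x : Fin m) (aa bb : ℕ), aa < k → bb < k →
          (x.val * k + aa) % m ≠ ((x + 1 : Fin m).val * k + bb) % m := by
        intro x aa bb ha hb heq
        rw [val_add_one' (by omega)] at heq
        have h1 : (x.val + 1) % m * k + bb ≡ (x.val + 1) * k + bb [MOD m] :=
          Nat.ModEq.add_right bb (Nat.ModEq.mul_right k (Nat.mod_modEq (x.val + 1) m))
        have h2 : x.val * k + aa ≡ (x.val + 1) * k + bb [MOD m] := (Nat.ModEq.trans heq h1 : _)
        have h3 : x.val * k + aa ≡ x.val * k + (k + bb) [MOD m] := by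
          calc x.val * k + aa ≡ (x.val + 1) * k + bb [MOD m] := h2
          _ = x.val * k + (k + bb) := by ring
        have h4 : aa ≡ k + bb [MOD m] := Nat.ModEq.add_left_cancel' _ h3
        have h5 : aa = k + bb := Nat.ModEq.eq_of_lt_of_lt h4 (by omega) (by omega)
        omega
      refine ⟨SimpleGraph.Coloring.mk
        (fun p => ⟨(p.1.val * k + (f p.2).val) % m, Nat.mod_lt _ (by omega)⟩) ?_⟩
      rintro ⟨x, v⟩ ⟨y, w⟩ hadj heq
      have hval : (x.val * k + (f v).val) % m = (y.val * k + (f w).val) % m :=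
        congrArg Fin.val heq
      have hfv := (f v).isLt
      have hfw := (f w).isLt
      rcases hadj with h | ⟨rfl, h⟩
      · rcases (cyc_adj_iff (by omega)).mp h with rfl | rfl
        · exact key x (f v).val (f (x + 1, w).2).val hfv hfw hval
        · exact key y (f w).val _ hfw hfv hval.symm
      · have hne : (f v).val ≠ (f w).val := fun hh => f.valid h (Fin.ext hh)
        have h4 : (f v).val ≡ (f w).val [MOD m] := Nat.ModEq.add_left_cancel' _ hval
        exact hne (Nat.ModEq.eq_of_lt_of_lt h4 (by omega) (by omega))
    -- lower bound: not colorable with 4s-2 colors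
    have hnot : ¬ ((SimpleGraph.cycleGraph m).lexProd H).Colorable (4 * s - 2) := by
      set N := 4 * s - 2 with hNdef
      rintro ⟨g⟩
      set S : Fin m → Finset (Fin N) := fun j => Finset.image (fun v => g (j, v)) univ with hS
      have hcard : ∀ j : Fin m, k ≤ (S j).card := by
        intro j
        have C : H.Coloring (S j) := SimpleGraph.Coloring.mk
          (fun v => ⟨g (j, v), by simp [hS]⟩)
          (by
            intro v w hvw heq
            have hadj : ((SimpleGraph.cycleGraph m).lexProd H).Adj (j, v) (j, w) :=
              Or.inr ⟨rfl, hvw⟩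
            exact g.valid hadj (congrArg Subtype.val heq))
        have hc2 := C.colorable.chromaticNumber_le
        rw [hHchi] at hc2
        have h2 : (k : ℕ∞) ≤ (Fintype.card (S j) : ℕ∞) := hc2
        rw [Fintype.card_coe] at h2
        exact_mod_cast h2
      have hdisj : ∀ a : Fin m, Disjoint (S a) (S (a + 1)) := by
        intro a
        rw [Finset.disjoint_left]
        intro x hxa hxb
        simp only [hS, mem_image, mem_univ, true_and] at hxa hxb
        obtain ⟨v, hv⟩ := hxa
        obtain ⟨w, hw⟩ := hxb
        have hadj : ((SimpleGraph.cycleGraph m).lexProd H).Adj (a, v) (a + 1, w) :=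
          Or.inl ((cyc_adj_iff (by omega)).mpr (Or.inl rfl))
        exact g.valid hadj (hv.trans hw.symm)
      have hcompl : ∀ a : Fin m, S (a + 1) = (S a)ᶜ := by
        intro a
        refine Finset.eq_of_subset_of_card_le (le_compl_iff_disjoint_left.mpr (hdisj a)) ?_
        have h1 : (S a)ᶜ.card = Fintype.card (Fin N) - (S a).card := Finset.card_compl _
        rw [Fintype.card_fin] at h1
        have h2 := hcard a
        have h3 := hcard (a + 1)
        omega
      have hstep2 : ∀ a : Fin m, S (a + 2) = S a := by
        intro a
        have h : a + 2 = (a + 1) + 1 := by ring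
        rw [h, hcompl, hcompl, compl_compl]
      have hiter : ∀ j : ℕ, S ((2 * j : ℕ) : Fin m) = S ((0 : ℕ) : Fin m) := by
        intro j
        induction j with
        | zero => rfl
        | succ i ih =>
          have h : ((2 * (i + 1) : ℕ) : Fin m) = ((2 * i : ℕ) : Fin m) + 2 := by push_cast; ring
          rw [h, hstep2, ih]
      have h2 : ((2 * k : ℕ) : Fin m) + 1 = ((0 : ℕ) : Fin m) := by
        have : ((2 * k : ℕ) : Fin m) + 1 = ((2 * k + 1 : ℕ) : Fin m) := by push_cast; ring
        rw [this, ← hmk, Fin.natCast_self, Nat.cast_zero]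
      have h3 : S ((0 : ℕ) : Fin m) = (S ((0 : ℕ) : Fin m))ᶜ := by
        have h6 := hcompl ((2 * k : ℕ) : Fin m)
        rw [h2, hiter k] at h6
        exact h6
      have h4 : S ((0 : ℕ) : Fin m) = ∅ := by
        have h5 : S ((0 : ℕ) : Fin m) ∩ (S ((0 : ℕ) : Fin m))ᶜ = ∅ := by simp
        rw [← h3, Finset.inter_self] at h5
        exact h5
      have h6 := hcard ((0 : ℕ) : Fin m)
      rw [h4, Finset.card_empty] at h6
      omega
    -- conclude
    have hle : ((SimpleGraph.cycleGraph m).lexProd H).chromaticNumber ≤ (m : ℕ∞) :=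
      hub.chromaticNumber_le
    have hnle : ¬ (((SimpleGraph.cycleGraph m).lexProd H).chromaticNumber
        ≤ ((4 * s - 2 : ℕ) : ℕ∞)) :=
      fun h => hnot (SimpleGraph.chromaticNumber_le_iff_colorable.mp h)
    have hlt : ((4 * s - 2 : ℕ) : ℕ∞) <
        ((SimpleGraph.cycleGraph m).lexProd H).chromaticNumber := lt_of_not_ge hnle
    have hge : ((4 * s - 2 : ℕ) : ℕ∞) + 1 ≤
        ((SimpleGraph.cycleGraph m).lexProd H).chromaticNumber := Order.add_one_le_of_lt hlt
    have hco : ((m : ℕ) : ℕ∞) = ((4 * s - 2 : ℕ) : ℕ∞) + 1 := by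
      have h7 : (m : ℕ) = (4 * s - 2) + 1 := by omega
      rw [h7, Nat.cast_add, Nat.cast_one]
    exact le_antisymm hle (hco ▸ hge)
end
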